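/- Let q0 be an odd prime power with q0 ≡ 7 (mod 8), and let s ≥ 1 and t ≥ 1 be odd integers. Let F be a finite field with q0^{2s} elements, K its q0-element subfield, and H the unique subgroup of Fˣ of order q0^s + 1; let F′ be a finite field with q0^{2st} elements, K′ its q0-element subfield, and H′ the unique subgroup of F′ˣ of order q0^{st} + 1. If there exists μ ∈ F such that μ ≠ c1·h1 + c2·h2 for all c1, c2 ∈ K and all h1, h2 ∈ H, then there exists μ′ ∈ F′ such that μ′ ≠ c1·h1 + c2·h2 for all c1, c2 ∈ K′ and all h1, h2 ∈ H′. Equivalently: if the covering radius of C_s(q0) is 3, then the covering radius of C_{st}(q0) is 3. -/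

import Mathlib

open Polynomial

private lemma pow_pow_fixed {F : Type*} [Monoid F] {x : F} {m : ℕ} (hx : x ^ m = x) :
    ∀ k : ℕ, x ^ m ^ k = x
  | 0 => pow_one x
  | k + 1 => by rw [pow_succ, pow_mul, pow_pow_fixed hx k, hx]

private lemma pow_odd_pow {F : Type*} [Monoid F] {x : F} {m t : ℕ} (hx : x ^ m ^ 2 = x)
    (ht : Odd t) : x ^ m ^ t = x ^ m := by
  obtain ⟨k, rfl⟩ := ht
  rw [show m ^ (2 * k + 1) = (m ^ 2) ^ k * m by rw [pow_succ, pow_mul], pow_mul,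
    pow_pow_fixed hx k]

private lemma mem_subgroup_iff_pow_eq_one {F : Type*} [Field F] [Fintype F] (H : Subgroup Fˣ)
    {n : ℕ} (hn : 0 < n) (hcard : Nat.card H = n) (x : Fˣ) : x ∈ H ↔ x ^ n = 1 := by
  classical
  have hsub : (H : Set Fˣ) ⊆ {y : Fˣ | y ^ n = 1} := by
    intro y hy
    have h1 : (⟨y, hy⟩ : H) ^ n = 1 := by rw [← hcard]; exact pow_card_eq_one'
    simpa [Subtype.ext_iff] using h1
  have hfin : {y : Fˣ | y ^ n = 1}.ncard ≤ n := by
    have h2 := card_nthRoots_subgroup_units (Units.coeHom F) (fun _ _ h => Units.ext h) hn 1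
    have h3 : {y : Fˣ | y ^ n = 1} =
        ↑(Finset.filter (fun g : Fˣ => g ^ n = (1 : Fˣ)) Finset.univ) := by
      ext y; simp
    rw [h3, Set.ncard_coe_finset]
    calc _ ≤ Multiset.card (nthRoots n ((Units.coeHom F) 1)) := h2
      _ ≤ n := Polynomial.card_nthRoots n _
  have hHcard : (H : Set Fˣ).ncard = n := by
    rw [← Nat.card_coe_set_eq]
    exact hcard
  have hEq : (H : Set Fˣ) = {y : Fˣ | y ^ n = 1} :=
    Set.eq_of_subset_of_ncard_le hsub (by rw [hHcard]; exact hfin) (Set.toFinite _)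
  constructor
  · intro hx; exact hsub hx
  · intro hx
    have : x ∈ (H : Set Fˣ) := by rw [hEq]; exact hx
    exact this

private lemma ncard_fixed_le {F : Type*} [Field F] [Fintype F] {n : ℕ} (hn : 1 < n) :
    {x : F | x ^ n = x}.ncard ≤ n := by
  classical
  have hne : (X ^ n - X : F[X]) ≠ 0 := FiniteField.X_pow_card_sub_X_ne_zero F hn
  have hsub : {x : F | x ^ n = x} ⊆ ((X ^ n - X : F[X]).roots.toFinset : Set F) := by
    intro x hx
    rw [Set.mem_setOf_eq] at hx
    simp only [Finset.mem_coe, Multiset.mem_toFinset]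
    rw [mem_roots hne]
    simp [IsRoot.def, sub_eq_zero, hx]
  calc {x : F | x ^ n = x}.ncard ≤ ((X ^ n - X : F[X]).roots.toFinset : Set F).ncard :=
        Set.ncard_le_ncard hsub (Set.toFinite _)
    _ = (X ^ n - X : F[X]).roots.toFinset.card := Set.ncard_coe_finset _
    _ ≤ Multiset.card (X ^ n - X : F[X]).roots := Multiset.toFinset_card_le _
    _ ≤ (X ^ n - X : F[X]).natDegree := Polynomial.card_roots' _
    _ = n := FiniteField.X_pow_card_sub_X_natDegree_eq F hn

private lemma subfield_coe_eq_fixed {F : Type*} [Field F] [Fintype F] (K : Subfield F) {n : ℕ}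
    (hn : 1 < n) (hcard : Nat.card K = n) : (K : Set F) = {x : F | x ^ n = x} := by
  classical
  have hsub : (K : Set F) ⊆ {x : F | x ^ n = x} := by
    intro x hx
    letI : Fintype K := Fintype.ofFinite K
    have h1 : (⟨x, hx⟩ : K) ^ Fintype.card K = ⟨x, hx⟩ := FiniteField.pow_card _
    rw [Nat.card_eq_fintype_card] at hcard
    rw [hcard] at h1
    simpa [Subtype.ext_iff] using h1
  have hKcard : (K : Set F).ncard = n := by
    rw [← Nat.card_coe_set_eq]; exact hcard
  exact Set.eq_of_subset_of_ncard_le hsub (by rw [hKcard]; exact ncard_fixed_le hn)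
    (Set.toFinite _)

private lemma image_subfield_eq {F F' : Type*} [Field F] [Fintype F] [Field F'] [Fintype F']
    (e : F →+* F') (K : Subfield F) (K' : Subfield F') {n : ℕ} (hn : 1 < n)
    (hcard : Nat.card K = n) (hcard' : Nat.card K' = n) :
    e '' (K : Set F) = (K' : Set F') := by
  have h1 := subfield_coe_eq_fixed K hn hcard
  have h2 := subfield_coe_eq_fixed K' hn hcard'
  have hsub : e '' (K : Set F) ⊆ {x : F' | x ^ n = x} := by
    rintro _ ⟨d, hd, rfl⟩
    have hdn : d ^ n = d := by rw [h1] at hd; exact hd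
    simp only [Set.mem_setOf_eq, ← map_pow, hdn]
  have him : (e '' (K : Set F)).ncard = n := by
    rw [Set.ncard_image_of_injective _ e.injective, ← Nat.card_coe_set_eq]
    exact hcard
  rw [h2]
  exact Set.eq_of_subset_of_ncard_le hsub (by rw [him]; exact ncard_fixed_le hn)
    (Set.toFinite _)

private lemma exists_ringHom_of_card_pow {F F' : Type*} [Field F] [Fintype F] [Field F']
    [Fintype F'] {c t : ℕ} (hc : 1 < c) (hF : Fintype.card F = c)
    (hF' : Fintype.card F' = c ^ t) : Nonempty (F →+* F') := by
  classical
  have ht0 : t ≠ 0 := by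
    rintro rfl
    rw [pow_zero] at hF'
    have := Fintype.one_lt_card (α := F')
    omega
  -- characteristic of F'
  set p := ringChar F' with hpdef
  haveI hCharp : CharP F' p := ringChar.charP F'
  have hp : p.Prime := CharP.char_is_prime F' p
  haveI : Fact p.Prime := ⟨hp⟩
  haveI : ExpChar F' p := ExpChar.prime hp
  obtain ⟨n, -, hcardp⟩ := FiniteField.card F' p
  -- c is a power of p
  have hcdvd : c ∣ p ^ (n : ℕ) := by
    rw [← hcardp, hF']
    exact dvd_pow_self c ht0
  obtain ⟨m, -, hm⟩ := (Nat.dvd_prime_pow hp).1 hcdvd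
  -- the subfield of elements fixed by x ↦ x ^ c
  set E : Subfield F' := RingHom.eqLocusField (iterateFrobenius F' p m) (RingHom.id F') with hE
  have hmem : ∀ x : F', x ∈ E ↔ x ^ c = x := by
    intro x
    constructor
    · intro hx
      have : iterateFrobenius F' p m x = x := hx
      rwa [iterateFrobenius_def, ← hm] at this
    · intro hx
      show iterateFrobenius F' p m x = RingHom.id F' x
      rwa [iterateFrobenius_def, ← hm]
  have hset : (E : Set F') = {x : F' | x ^ c = x} := Set.ext hmem
  -- counting: at most c
  have hle : (E : Set F').ncard ≤ c := by rw [hset]; exact ncard_fixed_le hc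
  -- counting: at least c, via a cyclic subgroup of order c - 1
  have hge : c ≤ (E : Set F').ncard := by
    obtain ⟨g, hg⟩ := IsCyclic.exists_generator (α := F'ˣ)
    have hog : orderOf g = c ^ t - 1 := by
      rw [orderOf_eq_card_of_forall_mem_zpowers hg, Nat.card_eq_fintype_card,
        Fintype.card_units, hF']
    set N := c ^ t - 1 with hN
    set d := c - 1 with hd
    have hdpos : 0 < d := by omega
    have hct : 1 < c ^ t := by
      calc 1 < c := hc
        _ ≤ c ^ t := Nat.le_self_pow ht0 c
    have hNpos : 0 < N := by omega
    have hdvd : d ∣ N := by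
      have := Nat.sub_dvd_pow_sub_pow c 1 t
      simpa using this
    set h0 := g ^ (N / d) with hh0
    have hoh0 : orderOf h0 = d := by
      rw [hh0, orderOf_pow, hog, Nat.gcd_eq_right (Nat.div_dvd_of_dvd hdvd),
        Nat.div_div_self hdvd (by omega)]
    have hh0d : h0 ^ d = 1 := by rw [← hoh0]; exact pow_orderOf_eq_one h0
    set A : Set F' := (fun u : F'ˣ => (u : F')) '' (Subgroup.zpowers h0 : Set F'ˣ) with hA
    have hAsub : A ⊆ (E : Set F') := by
      rintro _ ⟨u, hu, rfl⟩
      rw [hset]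
      obtain ⟨k, rfl⟩ := Subgroup.mem_zpowers_iff.1 hu
      have hud : (h0 ^ k) ^ d = 1 := by
        rw [← zpow_natCast, ← zpow_mul, mul_comm, zpow_mul, zpow_natCast, hh0d, one_zpow]
      have hc1 : d + 1 = c := by omega
      show ((h0 ^ k : F'ˣ) : F') ^ c = ((h0 ^ k : F'ˣ) : F')
      rw [← hc1, pow_succ, ← Units.val_pow_eq_pow_val, hud, Units.val_one, one_mul]
    have h0A : (0 : F') ∉ A := by
      rintro ⟨u, -, hu⟩
      exact u.ne_zero (by simpa using hu)
    have hAcard : A.ncard = d := by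
      rw [hA, Set.ncard_image_of_injective _ (fun _ _ h => Units.ext h), ← Nat.card_coe_set_eq]
      rw [show Nat.card (Subgroup.zpowers h0 : Set F'ˣ) = Nat.card (Subgroup.zpowers h0) from rfl,
        Nat.card_zpowers, hoh0]
    have hins : insert (0 : F') A ⊆ (E : Set F') := by
      rw [Set.insert_subset_iff]
      refine ⟨?_, hAsub⟩
      rw [hset]
      show (0 : F') ^ c = 0
      exact zero_pow (by omega)
    calc c = d + 1 := by omega
      _ = A.ncard + 1 := by rw [hAcard]
      _ = (insert (0 : F') A).ncard := (Set.ncard_insert_of_notMem h0A (Set.toFinite _)).symm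
      _ ≤ (E : Set F').ncard := Set.ncard_le_ncard hins (Set.toFinite _)
  have hEcard : Fintype.card E = c := by
    have h1 : Nat.card E = ((E : Set F')).ncard := by
      rw [← Nat.card_coe_set_eq]
      rfl
    rw [← Nat.card_eq_fintype_card, h1]
    omega
  exact ⟨E.subtype.comp (FiniteField.ringEquivOfCardEq (hF.trans hEcard.symm)).toRingHom⟩

/-- If the covering radius of `C_s(q0)` is `3` (some `μ` is not a sum of two
elements `c·h`), then the covering radius of `C_(st)(q0)` is `3` as well, for
any odd `t ≥ 1`. -/
theorem covering_radius_three_is_inherited (q0 s t : ℕ) (hq0 : IsPrimePow q0)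
    (hq0odd : Odd q0) (hq07 : q0 % 8 = 7) (hs : Odd s) (ht : Odd t)
    (F : Type*) [Field F] [Fintype F] (hF : Fintype.card F = q0 ^ (2 * s))
    (K : Subfield F) (hK : Nat.card K = q0)
    (H : Subgroup Fˣ) (hH : Nat.card H = q0 ^ s + 1)
    (F' : Type*) [Field F'] [Fintype F'] (hF' : Fintype.card F' = q0 ^ (2 * (s * t)))
    (K' : Subfield F') (hK' : Nat.card K' = q0)
    (H' : Subgroup F'ˣ) (hH' : Nat.card H' = q0 ^ (s * t) + 1)
    (h : ∃ μ : F, ∀ c1 c2 : F, c1 ∈ K → c2 ∈ K →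
      ∀ h1 h2 : Fˣ, h1 ∈ H → h2 ∈ H → μ ≠ c1 * (h1 : F) + c2 * (h2 : F)) :
    ∃ μ' : F', ∀ c1 c2 : F', c1 ∈ K' → c2 ∈ K' →
      ∀ h1 h2 : F'ˣ, h1 ∈ H' → h2 ∈ H' →
        μ' ≠ c1 * (h1 : F') + c2 * (h2 : F') := by
  obtain ⟨μ, hμ⟩ := h
  obtain ⟨p, a, hpp, ha, hpa⟩ := id hq0
  have hp : p.Prime := hpp.nat_prime
  haveI : Fact p.Prime := ⟨hp⟩
  have hq01 : 1 < q0 := hq0.one_lt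
  have hs0 : s ≠ 0 := by rintro rfl; simp [Nat.odd_iff] at hs
  have ht0 : t ≠ 0 := by rintro rfl; simp [Nat.odd_iff] at ht
  set q : ℕ := q0 ^ s with hqdef
  set Q : ℕ := q0 ^ (s * t) with hQdef
  have hq1 : 1 < q := Nat.one_lt_pow hs0 hq01
  have hQ1 : 1 < Q := Nat.one_lt_pow (by positivity) hq01
  have hqodd : Odd q := hq0odd.pow
  have hQodd : Odd Q := hq0odd.pow
  have hQqt : Q = q ^ t := by rw [hqdef, hQdef, ← pow_mul]
  have hcardF : Fintype.card F = q ^ 2 := by rw [hF, hqdef, ← pow_mul, mul_comm]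
  have hcardF' : Fintype.card F' = Q ^ 2 := by rw [hF', hQdef, ← pow_mul, mul_comm]
  -- characteristics
  have hcharF : CharP F p := by
    have hr : (ringChar F).Prime := CharP.char_is_prime F (ringChar F)
    obtain ⟨n, -, hcard⟩ := FiniteField.card F (ringChar F)
    have hdvd : ringChar F ∣ p ^ (a * (2 * s)) := by
      rw [pow_mul, hpa, ← hF, hcard]
      exact dvd_pow_self _ n.pos.ne'
    have : ringChar F = p := (Nat.prime_dvd_prime_iff_eq hr hp).1 (hr.dvd_of_dvd_pow hdvd)
    exact this ▸ ringChar.charP F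
  have hcharF' : CharP F' p := by
    have hr : (ringChar F').Prime := CharP.char_is_prime F' (ringChar F')
    obtain ⟨n, -, hcard⟩ := FiniteField.card F' (ringChar F')
    have hdvd : ringChar F' ∣ p ^ (a * (2 * (s * t))) := by
      rw [pow_mul, hpa, ← hF', hcard]
      exact dvd_pow_self _ n.pos.ne'
    have : ringChar F' = p := (Nat.prime_dvd_prime_iff_eq hr hp).1 (hr.dvd_of_dvd_pow hdvd)
    exact this ▸ ringChar.charP F'
  have hpne2 : p ≠ 2 := by
    rintro rfl
    rw [Nat.odd_iff, ← hpa] at hq0odd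
    rcases a with - | a
    · omega
    · rw [pow_succ, Nat.mul_mod_left] at hq0odd
      omega
  -- Frobenius additivity
  have hq_as_p : q = p ^ (a * s) := by rw [hqdef, ← hpa, ← pow_mul]
  have hQ_as_p : Q = p ^ (a * (s * t)) := by rw [hQdef, ← hpa, ← pow_mul]
  have hFrobF : ∀ x y : F, (x + y) ^ q = x ^ q + y ^ q := by
    intro x y
    haveI := hcharF
    rw [hq_as_p]
    exact add_pow_char_pow x y p (a * s)
  have hFrobF' : ∀ x y : F', (x + y) ^ Q = x ^ Q + y ^ Q := by
    intro x y
    haveI := hcharF'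
    rw [hQ_as_p]
    exact add_pow_char_pow x y p (a * (s * t))
  -- the embedding
  obtain ⟨e⟩ := exists_ringHom_of_card_pow (F := F) (F' := F')
    (c := q ^ 2) (t := t) (by nlinarith) hcardF
    (by rw [hcardF', hQqt]; ring)
  have hinj : Function.Injective e := e.injective
  -- membership characterizations
  have hHmem : ∀ x : Fˣ, x ∈ H ↔ x ^ (q + 1) = 1 :=
    mem_subgroup_iff_pow_eq_one H (by omega) (by rw [hH])
  have hH'mem : ∀ x : F'ˣ, x ∈ H' ↔ x ^ (Q + 1) = 1 :=
    mem_subgroup_iff_pow_eq_one H' (by omega) (by rw [hH'])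
  have hKset := subfield_coe_eq_fixed K hq01 hK
  have hK'img := image_subfield_eq e K K' hq01 hK hK'
  -- power facts
  have hxF : ∀ x : F, x ^ q ^ 2 = x := by
    intro x; rw [← hcardF]; exact FiniteField.pow_card x
  have hKq : ∀ d : F, d ∈ K → d ^ q = d := by
    intro d hd
    have h1 : d ^ q0 = d := by
      have := hKset ▸ (show d ∈ (K : Set F) from hd)
      exact this
    rw [hqdef]
    exact pow_pow_fixed h1 s
  have hKQ : ∀ d : F, d ∈ K → d ^ Q = d := by
    intro d hd
    have h1 : d ^ q0 = d := by
      have := hKset ▸ (show d ∈ (K : Set F) from hd)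
      exact this
    rw [hQdef]
    exact pow_pow_fixed h1 (s * t)
  -- μ is nonzero
  have hμ0 : μ ≠ 0 := by
    have := hμ 0 0 K.zero_mem K.zero_mem 1 1 H.one_mem H.one_mem
    simpa using this
  -- a single `c·h` representation of ν = μ^(q+1) gives a contradiction
  have hrep1 : ∀ dd : F, dd ∈ K → μ ^ (q + 1) = dd ^ 2 → False := by
    intro dd hdd hEq
    by_cases hdd0 : dd = 0
    · rw [hdd0] at hEq
      have hz : μ ^ (q + 1) = 0 := by rw [hEq]; norm_num
      exact hμ0 ((pow_eq_zero_iff (show q + 1 ≠ 0 by omega)).1 hz)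
    · have hw0 : μ / dd ≠ 0 := div_ne_zero hμ0 hdd0
      have hddq1 : dd ^ (q + 1) = dd ^ 2 := by
        rw [pow_succ, hKq dd hdd, sq]
      have hwpow : (μ / dd) ^ (q + 1) = 1 := by
        rw [div_pow, hEq, hddq1, div_self (pow_ne_zero 2 hdd0)]
      have hwH : Units.mk0 _ hw0 ∈ H := by
        rw [hHmem]
        ext
        simpa using hwpow
      have := hμ dd 0 hdd K.zero_mem (Units.mk0 _ hw0) 1 hwH H.one_mem
      apply this
      rw [Units.val_mk0, Units.val_one, zero_mul, add_zero, mul_div_cancel₀ _ hdd0]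
  -- the transported element works
  refine ⟨e μ, ?_⟩
  intro c1 c2 hc1 hc2 h1 h2 hm1 hm2 heq
  -- unit facts in F'
  set A : F' := (h1 : F') with hA
  set B : F' := (h2 : F') with hB
  have hA0 : A ≠ 0 := h1.ne_zero
  have hB0 : B ≠ 0 := h2.ne_zero
  have hApow : A ^ (Q + 1) = 1 := by
    have := (hH'mem h1).1 hm1
    calc A ^ (Q + 1) = ((h1 ^ (Q + 1) : F'ˣ) : F') := by rw [Units.val_pow_eq_pow_val]
      _ = 1 := by rw [this, Units.val_one]
  have hBpow : B ^ (Q + 1) = 1 := by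
    have := (hH'mem h2).1 hm2
    calc B ^ (Q + 1) = ((h2 ^ (Q + 1) : F'ˣ) : F') := by rw [Units.val_pow_eq_pow_val]
      _ = 1 := by rw [this, Units.val_one]
  have hAQ : A ^ Q = A⁻¹ := eq_inv_of_mul_eq_one_left (by rw [← pow_succ]; exact hApow)
  have hBQ : B ^ Q = B⁻¹ := eq_inv_of_mul_eq_one_left (by rw [← pow_succ]; exact hBpow)
  -- K' elements come from K
  obtain ⟨d1, hd1K, hd1e⟩ : ∃ d1 ∈ (K : Set F), e d1 = c1 := by
    have : c1 ∈ e '' (K : Set F) := by rw [hK'img]; exact hc1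
    obtain ⟨d, hd, hde⟩ := this
    exact ⟨d, hd, hde⟩
  obtain ⟨d2, hd2K, hd2e⟩ : ∃ d2 ∈ (K : Set F), e d2 = c2 := by
    have : c2 ∈ e '' (K : Set F) := by rw [hK'img]; exact hc2
    obtain ⟨d, hd, hde⟩ := this
    exact ⟨d, hd, hde⟩
  -- the key identity
  have heμQ : (e μ) ^ Q = e (μ ^ q) := by
    rw [← map_pow]
    congr 1
    rw [hQqt]
    exact pow_odd_pow (hxF μ) ht
  have hc1Q : c1 ^ Q = c1 := by rw [← hd1e, ← map_pow, hKQ d1 hd1K]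
  have hc2Q : c2 ^ Q = c2 := by rw [← hd2e, ← map_pow, hKQ d2 hd2K]
  have key : e (μ ^ (q + 1)) = c1 ^ 2 + c2 ^ 2 + c1 * c2 * (A * B⁻¹ + B * A⁻¹) := by
    have h1' : e (μ ^ (q + 1)) = (e μ) ^ Q * e μ := by
      rw [heμQ, ← map_mul, ← pow_succ]
    rw [h1', heq, hFrobF', mul_pow, mul_pow, hc1Q, hc2Q, hAQ, hBQ]
    field_simp
    ring
  -- case analysis
  by_cases hd20 : d2 = 0
  · have hc20 : c2 = 0 := by rw [← hd2e, hd20, map_zero]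
    apply hrep1 d1 hd1K
    apply hinj
    rw [key, hc20, map_pow, ← hd1e]
    ring
  by_cases hd10 : d1 = 0
  · have hc10 : c1 = 0 := by rw [← hd1e, hd10, map_zero]
    apply hrep1 d2 hd2K
    apply hinj
    rw [key, hc10, map_pow, ← hd2e]
    ring
  -- main case: both coefficients nonzero
  have hc10 : c1 ≠ 0 := by rw [← hd1e]; exact fun hh => hd10 (hinj (by rw [hh, map_zero]))
  have hc20 : c2 ≠ 0 := by rw [← hd2e]; exact fun hh => hd20 (hinj (by rw [hh, map_zero]))
  obtain ⟨z, hzmul⟩ : ∃ z : F, z * (d1 * d2) = μ ^ (q + 1) - d1 ^ 2 - d2 ^ 2 :=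
    ⟨_, div_mul_cancel₀ _ (mul_ne_zero hd10 hd20)⟩
  have hez : e z = A * B⁻¹ + B * A⁻¹ := by
    have h1' : e z * (c1 * c2) = e (μ ^ (q + 1)) - c1 ^ 2 - c2 ^ 2 := by
      rw [← hd1e, ← hd2e, ← map_mul, ← map_mul, ← map_pow, ← map_pow, ← map_sub, ← map_sub,
        hzmul]
    rw [key] at h1'
    have h2' : e z * (c1 * c2) = (A * B⁻¹ + B * A⁻¹) * (c1 * c2) := by
      rw [h1']; ring
    exact mul_right_cancel₀ (mul_ne_zero hc10 hc20) h2'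
  -- z is fixed by the q-power map
  have hzq : z ^ q = z := by
    have h1' : (A * B⁻¹ + B * A⁻¹) ^ Q = A * B⁻¹ + B * A⁻¹ := by
      rw [hFrobF', mul_pow, mul_pow, inv_pow, inv_pow, hAQ, hBQ, inv_inv, inv_inv]
      ring
    have h2' : e (z ^ q) = e z := by
      rw [← pow_odd_pow (hxF z) ht, ← hQqt, map_pow, hez, h1']
    exact hinj h2'
  -- find v in F with v² - z·v + 1 = 0 and v^(q+1) = 1
  have hvex : ∃ v : F, v ≠ 0 ∧ v ^ (q + 1) = 1 ∧ v ^ 2 - z * v + 1 = 0 := by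
    by_cases hz2 : z = 2
    · exact ⟨1, one_ne_zero, one_pow _, by rw [hz2]; ring⟩
    by_cases hzm2 : z = -2
    · exact ⟨-1, neg_ne_zero.2 one_ne_zero, Even.neg_one_pow (by simpa using hqodd.add_one),
        by rw [hzm2]; ring⟩
    have hD0 : z ^ 2 - 4 ≠ 0 := by
      intro hD
      have : (z - 2) * (z + 2) = 0 := by linear_combination hD
      rcases mul_eq_zero.1 this with h' | h'
      · exact hz2 (sub_eq_zero.1 h')
      · exact hzm2 (eq_neg_of_add_eq_zero_left h')
    have h2q : (2 : F) ^ q = 2 := by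
      have h := hFrobF 1 1
      norm_num at h
      exact h
    have hDq : (z ^ 2 - 4) ^ q = z ^ 2 - 4 := by
      have h1' : ((2 : F) ^ 2) ^ q = 2 ^ 2 := by rw [← pow_mul, mul_comm, pow_mul, h2q]
      have h2' : (z ^ 2) ^ q = z ^ 2 := by rw [← pow_mul, mul_comm, pow_mul, hzq]
      rw [show (4 : F) = 2 ^ 2 by norm_num, sub_eq_add_neg, hFrobF, hqodd.neg_pow, h1', h2',
        ← sub_eq_add_neg]
    have hDq1 : (z ^ 2 - 4) ^ (q - 1) = 1 := by
      have h1' : (z ^ 2 - 4) ^ (q - 1) * (z ^ 2 - 4) = 1 * (z ^ 2 - 4) := by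
        rw [one_mul, ← pow_succ]
        rw [show q - 1 + 1 = q by omega]
        exact hDq
      exact mul_right_cancel₀ hD0 h1'
    have hsq : IsSquare (z ^ 2 - 4) := by
      rw [FiniteField.isSquare_iff (by rw [ringChar.eq F p]; exact hpne2) hD0]
      have hdiv : Fintype.card F / 2 = (q - 1) * ((q + 1) / 2) := by
        obtain ⟨k, hk⟩ := hqodd
        rw [hcardF, hk]
        rw [show (2 * k + 1) ^ 2 = 2 * (2 * k * (k + 1)) + 1 by ring,
          show 2 * k + 1 - 1 = 2 * k by omega, show (2 * k + 1 + 1) / 2 = k + 1 by omega]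
        generalize 2 * k * (k + 1) = m
        omega
      rw [hdiv, pow_mul, hDq1, one_pow]
    obtain ⟨r, hr⟩ := hsq
    have h20 : (2 : F) ≠ 0 := by
      haveI := hcharF
      intro hh
      have h2' : p ∣ 2 := (CharP.cast_eq_zero_iff F p 2).1 (by exact_mod_cast hh)
      exact hpne2 ((Nat.prime_dvd_prime_iff_eq hp Nat.prime_two).1 h2')
    obtain ⟨v, hv2⟩ : ∃ v : F, 2 * v = z + r := ⟨(z + r) / 2, by field_simp⟩
    have h40 : (4 : F) ≠ 0 := by
      rw [show (4 : F) = 2 * 2 by norm_num]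
      exact mul_ne_zero h20 h20
    have hquad : v ^ 2 - z * v + 1 = 0 := by
      have hq4 : (4 : F) * (v ^ 2 - z * v + 1) = 0 := by
        linear_combination (2 * v - z + r) * hv2 - hr
      exact (mul_eq_zero.1 hq4).resolve_left h40
    have hv0 : v ≠ 0 := by
      intro hv
      rw [hv] at hquad
      simp at hquad
    have hvinv : v * (z - v) = 1 := by linear_combination -hquad
    have hroot : (v ^ q) ^ 2 - z * v ^ q + 1 = 0 := by
      have h1' : (v ^ 2 - z * v + 1) ^ q = 0 := by rw [hquad]; exact zero_pow (by omega)
      have e1 : (v ^ 2 - z * v + 1) ^ q = (v ^ 2) ^ q - (z * v) ^ q + 1 := by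
        rw [hFrobF, one_pow, sub_eq_add_neg, hFrobF, hqodd.neg_pow, ← sub_eq_add_neg]
      have e2 : (v ^ 2) ^ q = (v ^ q) ^ 2 := by rw [← pow_mul, mul_comm, pow_mul]
      have e3 : (z * v) ^ q = z * v ^ q := by rw [mul_pow, hzq]
      rw [← e3, ← e2, ← e1]
      exact h1'
    have hfac : (v ^ q - v) * (v ^ q - (z - v)) = 0 := by
      linear_combination hroot - hquad
    rcases mul_eq_zero.1 hfac with hcase | hcase
    · exfalso
      have hvq : v ^ q = v := sub_eq_zero.1 hcase
      have he1 : (e v) ^ Q = e v := by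
        rw [← map_pow, hQqt, pow_odd_pow (hxF v) ht, hvq]
      have hquad' : (e v) ^ 2 - e z * e v + 1 = 0 := by
        have := congrArg e hquad
        simpa [map_sub, map_add, map_mul, map_pow] using this
      have hABBA : (A * B⁻¹) * (B * A⁻¹) = 1 := by
        calc (A * B⁻¹) * (B * A⁻¹) = (A * A⁻¹) * (B⁻¹ * B) := by ring
          _ = 1 := by rw [mul_inv_cancel₀ hA0, inv_mul_cancel₀ hB0, one_mul]
      have hfac' : (e v - A * B⁻¹) * (e v - B * A⁻¹) = 0 := by
        rw [hez] at hquad'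
        linear_combination hquad' + hABBA
      have hfin : e v = 1 ∨ e v = -1 := by
        have hev : e v = A * B⁻¹ ∨ e v = B * A⁻¹ := by
          rcases mul_eq_zero.1 hfac' with h'' | h''
          · exact Or.inl (sub_eq_zero.1 h'')
          · exact Or.inr (sub_eq_zero.1 h'')
        have huQ : (e v) ^ Q = (e v)⁻¹ := by
          rcases hev with h'' | h''
          · rw [h'', mul_pow, inv_pow, hAQ, hBQ, inv_inv, mul_inv, inv_inv]
          · rw [h'', mul_pow, inv_pow, hBQ, hAQ, inv_inv, mul_inv, inv_inv]
        have hv0' : e v ≠ 0 := fun hh => hv0 (hinj (by rw [hh, map_zero]))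
        have hsq1 : (e v) ^ 2 = 1 := by
          have h1 : (e v)⁻¹ = e v := by rw [← huQ, he1]
          calc (e v) ^ 2 = e v * e v := pow_two (e v)
            _ = (e v)⁻¹ * e v := by rw [h1]
            _ = 1 := inv_mul_cancel₀ hv0'
        have : (e v - 1) * (e v + 1) = 0 := by linear_combination hsq1
        rcases mul_eq_zero.1 this with h'' | h''
        · exact Or.inl (sub_eq_zero.1 h'')
        · exact Or.inr (eq_neg_of_add_eq_zero_left h'')
      rcases hfin with h'' | h''
      · have hv1 : v = 1 := hinj (by rw [h'', map_one])
        rw [hv1] at hquad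
        exact hz2 (by linear_combination -hquad)
      · have hv1 : v = -1 := hinj (by rw [h'', map_neg, map_one])
        rw [hv1] at hquad
        exact hzm2 (by linear_combination hquad)
    · have hvq : v ^ q = z - v := sub_eq_zero.1 hcase
      refine ⟨v, hv0, ?_, hquad⟩
      rw [pow_succ, hvq]
      linear_combination hvinv
  obtain ⟨v, hv0, hvpow, hquad⟩ := hvex
  have hvinv : v * (z - v) = 1 := by linear_combination -hquad
  have hvq : v ^ q = z - v := by
    have h1' : v ^ q * v = (z - v) * v := by
      rw [← pow_succ, hvpow, mul_comm]
      exact hvinv.symm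
    exact mul_right_cancel₀ hv0 h1'
  set y : F := d1 * v + d2 with hydef
  have hyq : y ^ q = d1 * (z - v) + d2 := by
    rw [hydef, hFrobF, mul_pow, hKq d1 hd1K, hKq d2 hd2K, hvq]
  have hyν : y ^ (q + 1) = μ ^ (q + 1) := by
    rw [pow_succ, hyq, hydef]
    linear_combination (d1 ^ 2) * hvinv + hzmul
  have hy0 : y ≠ 0 := by
    intro hy
    rw [hy] at hyν
    rw [zero_pow (by omega)] at hyν
    exact hμ0 ((pow_eq_zero_iff (n := q + 1) (by omega)).1 hyν.symm)
  have hw0 : μ / y ≠ 0 := div_ne_zero hμ0 hy0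
  have hwpow : (μ / y) ^ (q + 1) = 1 := by
    rw [div_pow, ← hyν, div_self (pow_ne_zero _ hy0)]
  have hvw0 : v * (μ / y) ≠ 0 := mul_ne_zero hv0 hw0
  have hvwpow : (v * (μ / y)) ^ (q + 1) = 1 := by
    rw [mul_pow, hvpow, hwpow, one_mul]
  have hWH : Units.mk0 _ hw0 ∈ H := by
    rw [hHmem]; ext; simpa using hwpow
  have hVWH : Units.mk0 _ hvw0 ∈ H := by
    rw [hHmem]; ext; simpa using hvwpow
  have := hμ d1 d2 hd1K hd2K (Units.mk0 _ hvw0) (Units.mk0 _ hw0) hVWH hWH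
  apply this
  have hfold : d1 * (v * (μ / y)) + d2 * (μ / y) = (d1 * v + d2) * (μ / y) := by ring
  rw [Units.val_mk0, Units.val_mk0, hfold, ← hydef, mul_comm y (μ / y),
    div_mul_cancel₀ _ hy0]
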